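/- Let a : ℝⁿ → ℂ be supported in the ellipsoid B₀ (with |B₀| = 1), belong to L^q for some 1 ≤ q ≤ ∞, and satisfy ∫ a(x) x^β dx = 0 for all multi-indices |β| ≤ s. Then for every multi-index α with |α| ≤ s and every ξ ∈ ℝⁿ, |∂^α (𝓕 a)(ξ)| ≤ C ‖a‖_q · min{1, |ξ|^{s−|α|+1}}, where C depends only on s, n, and B₀. -/

import Mathlib

open MeasureTheory Matrix
open scoped FourierTransform ENNReal
open Finset
open scoped Real

noncomputable section

lemma aux_exp_taylor_bound (d : ℕ) (B t : ℝ) (hB1 : 2 * π * B ≤ 1) (ht : |t| ≤ B) :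
    ‖Complex.exp ((↑(-2 * π * t)) * Complex.I) -
        ∑ j ∈ Finset.range (d + 1), ((↑(-2 * π * t)) * Complex.I) ^ j / (j.factorial : ℂ)‖
      ≤ 2 * (2 * π * B) ^ (d + 1) := by
  have hB0 : 0 ≤ B := (abs_nonneg t).trans ht
  set x : ℂ := (↑(-2 * π * t)) * Complex.I with hx
  have hxabs : ‖x‖ ≤ 2 * π * B := by
    rw [hx, norm_mul, Complex.norm_I, mul_one, Complex.norm_real, Real.norm_eq_abs]
    calc |(-2 * π * t)| = 2 * π * |t| := by
          rw [abs_mul, abs_mul]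
          simp [abs_of_nonneg Real.pi_nonneg]
      _ ≤ 2 * π * B := mul_le_mul_of_nonneg_left ht (by positivity)
  have hx1 : ‖x‖ ≤ 1 := hxabs.trans hB1
  have hbd := Complex.exp_bound hx1 (n := d + 1) (Nat.succ_pos d)
  have hfact : (((d + 1) + 1 : ℕ) : ℝ) * (((d+1).factorial : ℝ) * ((d+1) : ℝ))⁻¹ ≤ 2 := by
    rw [mul_inv_le_iff₀ (by positivity)]
    have h1 : (1 : ℝ) ≤ ((d+1).factorial : ℝ) := by
      exact_mod_cast Nat.one_le_iff_ne_zero.2 (Nat.factorial_ne_zero _)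
    push_cast
    nlinarith
  calc ‖Complex.exp x - ∑ j ∈ Finset.range (d + 1), x ^ j / (j.factorial : ℂ)‖
      ≤ ‖x‖ ^ (d + 1) *
          ((((d + 1) + 1 : ℕ) : ℝ) * (((d+1).factorial : ℝ) * ((d+1) : ℝ))⁻¹) := by
        simpa using hbd
    _ ≤ (2 * π * B) ^ (d + 1) * 2 :=
        mul_le_mul (pow_le_pow_left₀ (norm_nonneg _) hxabs _) hfact (by positivity)
          (by positivity)
    _ = 2 * (2 * π * B) ^ (d + 1) := by ring


/-- if `a` is supported in a fixed bounded convex set `B₀` of measure 1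
containing `0`, lies in `L^q` (`1 ≤ q ≤ ∞`), and has vanishing moments up to order `s`,
then for every multi-index `α` with `|α| ≤ s` (encoded by `m : Fin k → Fin n`, `k ≤ s`)
`|∂^α (𝓕 a)(ξ)| ≤ C ‖a‖_q min{1, |ξ|^{s-|α|+1}}`, with `C = C(s, n, B₀)`. -/
theorem fourier_deriv_bound_of_atom_on_B0
    {n : ℕ} (s : ℕ) (B0 : Set (EuclideanSpace ℝ (Fin n)))
    (hB0bdd : Bornology.IsBounded B0) (hB0conv : Convex ℝ B0)
    (hB0mem : (0 : EuclideanSpace ℝ (Fin n)) ∈ B0)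
    (hB0vol : volume B0 = 1) :
    ∃ C > 0, ∀ (q : ℝ≥0∞), 1 ≤ q → ∀ (a : EuclideanSpace ℝ (Fin n) → ℂ),
      MemLp a q volume →
      Function.support a ⊆ B0 →
      (∀ β : Fin n → ℕ, (∑ i, β i) ≤ s →
        ∫ x, a x * ∏ i, (x i : ℂ) ^ β i = 0) →
      ∀ (k : ℕ), k ≤ s → ∀ (m : Fin k → Fin n) (ξ : EuclideanSpace ℝ (Fin n)),
        ‖iteratedFDeriv ℝ k (𝓕 a) ξ (fun i => EuclideanSpace.single (m i) 1)‖
          ≤ C * (eLpNorm a q volume).toReal * min 1 (‖ξ‖ ^ (s - k + 1)) := by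
  classical
  obtain ⟨R, hR1, hRB⟩ : ∃ R : ℝ, 1 ≤ R ∧ B0 ⊆ Metric.closedBall 0 R := by
    obtain ⟨r, hr⟩ := hB0bdd.subset_closedBall 0
    exact ⟨max r 1, le_max_right _ _,
      hr.trans (Metric.closedBall_subset_closedBall (le_max_left _ _))⟩
  have hRpos : (0 : ℝ) < R := lt_of_lt_of_le one_pos hR1
  set S : Set (EuclideanSpace ℝ (Fin n)) := Metric.closedBall 0 R with hS
  have hSmeas : MeasurableSet S := measurableSet_closedBall
  have hScompact : IsCompact S := isCompact_closedBall _ _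
  have hSfin : volume S ≠ ∞ := hScompact.measure_lt_top.ne
  set M0 : ℝ := (max 1 (volume S)).toReal with hM0def
  have hM0 : 1 ≤ M0 := by
    rw [hM0def, show (1:ℝ) = (1:ℝ≥0∞).toReal by simp]
    exact ENNReal.toReal_mono (by simp [hSfin]) (le_max_left _ _)
  have hD1 : (1 : ℝ) ≤ 2 * π * R := by nlinarith [Real.pi_gt_three]
  have hDpos : (0 : ℝ) < 2 * π * R := lt_of_lt_of_le one_pos hD1
  refine ⟨2 * (2 * π * R) ^ (2 * s + 2) * M0, by positivity, ?_⟩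
  intro q hq a ha hsupp hmom k hk m ξ
  have hsuppS : ∀ x, x ∉ S → a x = 0 := by
    intro x hx
    by_contra h
    exact hx (hRB (hsupp h))
  have hmemS : ∀ v : EuclideanSpace ℝ (Fin n), v ∈ S → ‖v‖ ≤ R := by
    intro v hv
    rw [hS] at hv
    exact mem_closedBall_zero_iff.1 hv
  have haInt : Integrable a volume :=
    memLp_one_iff_integrable.1
      (ha.mono_exponent_of_measure_support_ne_top hsuppS hSfin hq)
  have hcoord : ∀ (v : EuclideanSpace ℝ (Fin n)) (i : Fin n), |v i| ≤ ‖v‖ := by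
    intro v i
    have := abs_real_inner_le_norm v (EuclideanSpace.single i (1:ℝ))
    simpa [EuclideanSpace.inner_single_right] using this
  -- master integrability
  have hInt : ∀ φ : EuclideanSpace ℝ (Fin n) → ℂ, Continuous φ →
      Integrable (fun v => φ v * a v) volume := by
    intro φ hφ
    obtain ⟨M, hM⟩ := hScompact.exists_bound_of_continuousOn (hφ.continuousOn : ContinuousOn φ S)
    refine Integrable.mono' (haInt.norm.const_mul M)
      (hφ.aestronglyMeasurable.mul ha.aestronglyMeasurable) ?_
    filter_upwards with v
    rcases em (v ∈ S) with hv | hv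
    · rw [norm_mul]
      exact mul_le_mul_of_nonneg_right (hM v hv) (norm_nonneg _)
    · simp [hsuppS v hv]
  have hgrow : ∀ (n' : ℕ), (n' : ℕ∞) ≤ (s : ℕ∞) →
      Integrable (fun v : EuclideanSpace ℝ (Fin n) => ‖v‖ ^ n' * ‖a v‖) volume := by
    intro n' _
    refine Integrable.mono' (haInt.norm.const_mul (R ^ n'))
      (((continuous_norm.pow n').aestronglyMeasurable).mul ha.aestronglyMeasurable.norm) ?_
    filter_upwards with v
    rcases em (v ∈ S) with hv | hv
    · rw [Real.norm_of_nonneg (by positivity)]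
      exact mul_le_mul_of_nonneg_right (pow_le_pow_left₀ (norm_nonneg _) (hmemS v hv) _)
        (norm_nonneg _)
    · simp [hsuppS v hv]
  -- L1 bound
  set A1 : ℝ := ∫ v, ‖a v‖ with hA1def
  have hA1nonneg : 0 ≤ A1 := integral_nonneg fun v => norm_nonneg _
  have hA1 : A1 ≤ M0 * (eLpNorm a q volume).toReal := by
    have h1 : eLpNorm a 1 volume = eLpNorm a 1 (volume.restrict S) := by
      rw [← eLpNorm_indicator_eq_eLpNorm_restrict hSmeas]
      congr 1
      exact (Set.indicator_eq_self.2 (Function.support_subset_iff'.2 hsuppS)).symm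
    have h2 : eLpNorm a 1 (volume.restrict S) ≤
        eLpNorm a q (volume.restrict S) * (volume S) ^ (1 / (1:ℝ≥0∞).toReal - 1 / q.toReal) := by
      have := eLpNorm_le_eLpNorm_mul_rpow_measure_univ (μ := volume.restrict S) hq
        ha.aestronglyMeasurable.restrict
      simpa using this
    have h3 : eLpNorm a q (volume.restrict S) ≤ eLpNorm a q volume :=
      eLpNorm_mono_measure a Measure.restrict_le_self
    have hexp0 : 0 ≤ 1 / (1:ℝ≥0∞).toReal - 1 / q.toReal := by
      simp only [ENNReal.toReal_one, one_div]
      have : q.toReal⁻¹ ≤ 1 := by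
        rcases eq_or_ne q ∞ with rfl | hqt
        · simp
        · rw [inv_le_one_iff₀]
          right
          rw [show (1:ℝ) = (1:ℝ≥0∞).toReal by simp]
          exact ENNReal.toReal_mono hqt hq
      linarith
    have hexp1 : 1 / (1:ℝ≥0∞).toReal - 1 / q.toReal ≤ 1 := by
      simp only [ENNReal.toReal_one, one_div]
      have : 0 ≤ q.toReal⁻¹ := by positivity
      linarith
    have h4 : (volume S) ^ (1 / (1:ℝ≥0∞).toReal - 1 / q.toReal) ≤ max 1 (volume S) := by
      rcases le_total (volume S) 1 with hvs | hvs
      · exact le_trans (ENNReal.rpow_le_one hvs hexp0) (le_max_left _ _)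
      · calc (volume S) ^ (1 / (1:ℝ≥0∞).toReal - 1 / q.toReal)
            ≤ (volume S) ^ (1:ℝ) := ENNReal.rpow_le_rpow_of_exponent_le hvs hexp1
          _ = volume S := ENNReal.rpow_one _
          _ ≤ max 1 (volume S) := le_max_right _ _
    have h5 : eLpNorm a 1 volume ≤ eLpNorm a q volume * max 1 (volume S) := by
      rw [h1]
      exact h2.trans (mul_le_mul' h3 h4)
    have hfin : eLpNorm a q volume * max 1 (volume S) ≠ ∞ :=
      ENNReal.mul_ne_top ha.2.ne (by simp [hSfin])
    have h6 := ENNReal.toReal_mono hfin h5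
    rw [ENNReal.toReal_mul] at h6
    have h7 : A1 = (eLpNorm a 1 volume).toReal := by
      rw [hA1def, eLpNorm_one_eq_lintegral_enorm,
        integral_norm_eq_lintegral_enorm ha.aestronglyMeasurable]
    rw [h7, mul_comm M0 _]
    exact h6
  -- the function G
  set c : ℂ := (-(2 * π * Complex.I)) ^ k with hc
  set φG : EuclideanSpace ℝ (Fin n) → ℂ := fun v => c * ∏ i, (v (m i) : ℂ) with hφG
  have hφGcont : Continuous φG := by
    rw [hφG]; fun_prop
  set G : EuclideanSpace ℝ (Fin n) → ℂ := fun v => φG v * a v with hG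
  have hGint : Integrable G volume := hInt φG hφGcont
  have hmul : ∀ ψ : EuclideanSpace ℝ (Fin n) → ℂ, Continuous ψ →
      Integrable (fun v => ψ v * G v) volume := by
    intro ψ hψ
    refine (hInt (fun v => ψ v * φG v) (hψ.mul hφGcont)).congr ?_
    filter_upwards with v
    simp only [hG]
    ring
  have hGbound : ∀ v, ‖G v‖ ≤ (2 * π * R) ^ s * ‖a v‖ := by
    intro v
    rcases em (v ∈ S) with hv | hv
    · have hvR : ‖v‖ ≤ R := hmemS v hv
      have h1 : ‖φG v‖ ≤ (2 * π * R) ^ s := by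
        have hcnorm : ‖c‖ = (2 * π) ^ k := by
          rw [hc, norm_pow, norm_neg]
          rw [show ‖(2 * (π:ℂ) * Complex.I)‖ = 2 * π by
            simp [abs_of_nonneg Real.pi_nonneg]]
        have h2 : ‖∏ i, ((v (m i) : ℝ) : ℂ)‖ ≤ R ^ k := by
          rw [norm_prod]
          calc ∏ i, ‖((v (m i) : ℝ) : ℂ)‖ ≤ ∏ _i : Fin k, R := by
                refine Finset.prod_le_prod (fun i _ => norm_nonneg _) (fun i _ => ?_)
                rw [Complex.norm_real, Real.norm_eq_abs]
                exact (hcoord v (m i)).trans hvR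
            _ = R ^ k := by simp
        calc ‖φG v‖ = ‖c‖ * ‖∏ i, ((v (m i) : ℝ) : ℂ)‖ := by rw [hφG, norm_mul]
          _ ≤ (2 * π) ^ k * R ^ k := by
              rw [hcnorm]
              exact mul_le_mul_of_nonneg_left h2 (by positivity)
          _ = (2 * π * R) ^ k := by ring
          _ ≤ (2 * π * R) ^ s := pow_le_pow_right₀ hD1 hk
      calc ‖G v‖ = ‖φG v‖ * ‖a v‖ := by rw [hG, norm_mul]
        _ ≤ (2 * π * R) ^ s * ‖a v‖ := mul_le_mul_of_nonneg_right h1 (norm_nonneg _)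
    · have : a v = 0 := hsuppS v hv
      simp only [hG, this, mul_zero, norm_zero]
      positivity
  have hIG : ∫ v, ‖G v‖ ≤ (2 * π * R) ^ s * A1 := by
    rw [hA1def, ← integral_const_mul]
    exact integral_mono hGint.norm (haInt.norm.const_mul _) hGbound
  -- step 1: derivative as Fourier integral of G
  have hstep : iteratedFDeriv ℝ k (𝓕 a) ξ (fun i => EuclideanSpace.single (m i) 1) = 𝓕 G ξ := by
    rw [Real.iteratedFDeriv_fourier (N := (s : ℕ∞)) hgrow ha.aestronglyMeasurable
      (by exact_mod_cast hk)]
    rw [Real.fourier_continuousMultilinearMap_apply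
      (VectorFourier.integrable_fourierPowSMulRight _ (hgrow k (by exact_mod_cast hk))
        ha.aestronglyMeasurable)]
    refine congrArg (fun f : EuclideanSpace ℝ (Fin n) → ℂ => 𝓕 f ξ) ?_
    ext v
    have hins : ∀ i : Fin k, ((innerSL ℝ) v) (EuclideanSpace.single (m i) 1) = v (m i) := by
      intro i; simp [EuclideanSpace.inner_single_right]
    rw [VectorFourier.fourierPowSMulRight_apply]
    simp only [hins, hG, hφG, hc, smul_eq_mul, Complex.real_smul, Complex.ofReal_prod]
    ring
  rw [hstep]
  -- vanishing moments, generic index form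
  have hmom' : ∀ (ι : Type) [Fintype ι] (p : ι → Fin n), Fintype.card ι ≤ s →
      ∫ x, a x * ∏ t, (x (p t) : ℂ) = 0 := by
    intro ι _ p h
    set β : Fin n → ℕ := fun i => (Finset.univ.filter fun t => p t = i).card with hβ
    have hsum : ∑ i, β i = Fintype.card ι := by
      rw [← Finset.card_eq_sum_card_fiberwise (fun x _ => Finset.mem_univ (p x))]
      rfl
    have hprod : ∀ x : EuclideanSpace ℝ (Fin n),
        ∏ t, (x (p t) : ℂ) = ∏ i, (x i : ℂ) ^ β i := by
      intro x
      rw [← Finset.prod_fiberwise_of_maps_to (fun t _ => Finset.mem_univ (p t))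
        (fun t => (x (p t) : ℂ))]
      refine Finset.prod_congr rfl fun i _ => ?_
      rw [Finset.prod_congr rfl (fun t ht => by rw [(Finset.mem_filter.1 ht).2]),
        Finset.prod_const]
    simp_rw [hprod]
    exact hmom β (hsum ▸ h)
  have hkey : ∀ (j : ℕ), j + k ≤ s →
      ∫ x, ((inner ℝ x ξ : ℝ) : ℂ) ^ j * G x = 0 := by
    intro j hj
    have hexp : ∀ x : EuclideanSpace ℝ (Fin n),
        ((inner ℝ x ξ : ℝ) : ℂ) ^ j = ∑ p : Fin j → Fin n, ∏ t, (x (p t) * ξ (p t) : ℂ) := by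
      intro x
      simp only [PiLp.inner_apply, RCLike.inner_apply, conj_trivial]
      push_cast
      rw [Fintype.sum_pow]
      simp only [mul_comm]
    simp_rw [hexp, Finset.sum_mul]
    rw [integral_finset_sum]
    · refine Finset.sum_eq_zero fun p _ => ?_
      have heq : ∀ x : EuclideanSpace ℝ (Fin n),
          (∏ t, (x (p t) * ξ (p t) : ℂ)) * G x
            = ((∏ t, (ξ (p t) : ℂ)) * c) * (a x * ∏ r, (x (Sum.elim p m r) : ℂ)) := by
        intro x
        simp only [hG, hφG]
        rw [Fintype.prod_sum_type]
        simp only [Sum.elim_inl, Sum.elim_inr, Finset.prod_mul_distrib]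
        ring
      simp_rw [heq]
      rw [integral_const_mul, hmom' _ (Sum.elim p m) (by simpa using hj), mul_zero]
    · intro p _
      exact hmul _ (by fun_prop)
  -- continuity facts
  have hinnerC : Continuous fun v : EuclideanSpace ℝ (Fin n) => (inner ℝ v ξ : ℝ) :=
    continuous_id.inner continuous_const
  have hEcont : Continuous fun v : EuclideanSpace ℝ (Fin n) =>
      Complex.exp ((↑(-2 * π * (inner ℝ v ξ : ℝ))) * Complex.I) := by
    apply Complex.continuous_exp.comp
    exact (Complex.continuous_ofReal.comp (by fun_prop)).mul continuous_const
  -- two cases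
  rcases le_or_gt (2 * π * R * ‖ξ‖) 1 with hxi | hxi
  · -- Taylor case
    set d : ℕ := s - k with hd
    set P : EuclideanSpace ℝ (Fin n) → ℂ :=
      fun v => ∑ j ∈ Finset.range (d + 1),
        ((↑(-2 * π * (inner ℝ v ξ : ℝ))) * Complex.I) ^ j / (j.factorial : ℂ) with hP
    have hPcont : Continuous P := by
      rw [hP]
      refine continuous_finset_sum _ fun j _ => ?_
      exact (((Complex.continuous_ofReal.comp (by fun_prop)).mul continuous_const).pow j).div_const _
    have hPG : ∫ v, P v * G v = 0 := by
      have hrw : ∀ v : EuclideanSpace ℝ (Fin n), P v * G v =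
          ∑ j ∈ Finset.range (d + 1),
            ((-(2 * π * Complex.I)) ^ j / (j.factorial : ℂ)) *
              (((inner ℝ v ξ : ℝ) : ℂ) ^ j * G v) := by
        intro v
        rw [hP, Finset.sum_mul]
        refine Finset.sum_congr rfl fun j _ => ?_
        rw [show ((↑(-2 * π * (inner ℝ v ξ : ℝ)) : ℂ) * Complex.I) ^ j
            = (-(2 * π * Complex.I)) ^ j * ((inner ℝ v ξ : ℝ) : ℂ) ^ j by
          rw [← mul_pow]; congr 1; push_cast; ring]
        ring
      simp_rw [hrw]
      rw [integral_finset_sum]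
      · refine Finset.sum_eq_zero fun j hj => ?_
        rw [integral_const_mul, hkey j (by have := Finset.mem_range.1 hj; omega), mul_zero]
      · intro j _
        refine (hmul (fun v => ((-(2 * π * Complex.I)) ^ j / (j.factorial : ℂ)) *
          ((inner ℝ v ξ : ℝ) : ℂ) ^ j) (by fun_prop)).congr ?_
        filter_upwards with v
        ring
    have h𝓕 : 𝓕 G ξ = ∫ v, Complex.exp ((↑(-2 * π * (inner ℝ v ξ : ℝ))) * Complex.I) * G v := by
      rw [Real.fourier_eq']
      simp_rw [smul_eq_mul]
    have hsplit : (∫ v, Complex.exp ((↑(-2 * π * (inner ℝ v ξ : ℝ))) * Complex.I) * G v)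
        = ∫ v, (Complex.exp ((↑(-2 * π * (inner ℝ v ξ : ℝ))) * Complex.I) - P v) * G v := by
      simp_rw [sub_mul]
      rw [integral_sub (hmul _ hEcont) (hmul _ hPcont), hPG, sub_zero]
    rw [h𝓕, hsplit]
    -- pointwise estimate
    have hptwise : ∀ v, ‖(Complex.exp ((↑(-2 * π * (inner ℝ v ξ : ℝ))) * Complex.I) - P v) * G v‖
        ≤ (2 * (2 * π * (R * ‖ξ‖)) ^ (d + 1)) * ‖G v‖ := by
      intro v
      rcases em (v ∈ S) with hv | hv
      · have hB1 : 2 * π * (R * ‖ξ‖) ≤ 1 := by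
          calc 2 * π * (R * ‖ξ‖) = 2 * π * R * ‖ξ‖ := by ring
            _ ≤ 1 := hxi
        have ht : |(inner ℝ v ξ : ℝ)| ≤ R * ‖ξ‖ := by
          calc |(inner ℝ v ξ : ℝ)| ≤ ‖v‖ * ‖ξ‖ := abs_real_inner_le_norm v ξ
            _ ≤ R * ‖ξ‖ := mul_le_mul_of_nonneg_right (hmemS v hv) (norm_nonneg _)
        have hEP := aux_exp_taylor_bound d (R * ‖ξ‖) (inner ℝ v ξ : ℝ) hB1 ht
        rw [norm_mul]
        refine mul_le_mul_of_nonneg_right ?_ (norm_nonneg _)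
        rw [hP]
        exact hEP
      · have : G v = 0 := by simp only [hG, hsuppS v hv, mul_zero]
        simp [this]
    have hnorm : ‖∫ v, (Complex.exp ((↑(-2 * π * (inner ℝ v ξ : ℝ))) * Complex.I) - P v) * G v‖
        ≤ (2 * (2 * π * (R * ‖ξ‖)) ^ (d + 1)) * ((2 * π * R) ^ s * A1) := by
      calc ‖∫ v, (Complex.exp ((↑(-2 * π * (inner ℝ v ξ : ℝ))) * Complex.I) - P v) * G v‖
          ≤ ∫ v, (2 * (2 * π * (R * ‖ξ‖)) ^ (d + 1)) * ‖G v‖ := by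
            refine norm_integral_le_of_norm_le (hGint.norm.const_mul _) ?_
            filter_upwards with v
            exact hptwise v
        _ = (2 * (2 * π * (R * ‖ξ‖)) ^ (d + 1)) * ∫ v, ‖G v‖ := integral_const_mul _ _
        _ ≤ (2 * (2 * π * (R * ‖ξ‖)) ^ (d + 1)) * ((2 * π * R) ^ s * A1) :=
            mul_le_mul_of_nonneg_left hIG (by positivity)
    refine hnorm.trans ?_
    have hxile : ‖ξ‖ ≤ 1 := by nlinarith [norm_nonneg ξ]
    have hmin : min 1 (‖ξ‖ ^ (s - k + 1)) = ‖ξ‖ ^ (d + 1) := by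
      rw [← hd]
      exact min_eq_right (pow_le_one₀ (norm_nonneg _) hxile)
    rw [hmin]
    calc (2 * (2 * π * (R * ‖ξ‖)) ^ (d + 1)) * ((2 * π * R) ^ s * A1)
        = (2 * (2 * π * R) ^ (d + 1 + s)) * A1 * ‖ξ‖ ^ (d + 1) := by
          rw [show (2 * π * (R * ‖ξ‖)) = (2 * π * R) * ‖ξ‖ by ring, mul_pow, pow_add]
          ring
      _ ≤ (2 * (2 * π * R) ^ (2 * s + 2)) * (M0 * (eLpNorm a q volume).toReal) * ‖ξ‖ ^ (d + 1) := by
          refine mul_le_mul_of_nonneg_right ?_ (by positivity)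
          refine mul_le_mul ?_ hA1 hA1nonneg (by positivity)
          exact mul_le_mul_of_nonneg_left (pow_le_pow_right₀ hD1 (by omega)) (by norm_num)
      _ = 2 * (2 * π * R) ^ (2 * s + 2) * M0 * (eLpNorm a q volume).toReal * ‖ξ‖ ^ (d + 1) := by
          ring
  · -- trivial case
    have htriv : ‖𝓕 G ξ‖ ≤ ∫ v, ‖G v‖ :=
      VectorFourier.norm_fourierIntegral_le_integral_norm _ _ _ _ _
    set mn : ℝ := min 1 (‖ξ‖ ^ (s - k + 1)) with hmn
    have hmn0 : 0 ≤ mn := le_min (by norm_num) (by positivity)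
    have hmn1 : 1 ≤ mn * (2 * π * R) ^ (s + 1) := by
      rcases min_cases 1 (‖ξ‖ ^ (s - k + 1)) with ⟨h1, _⟩ | ⟨h1, _⟩
      · rw [hmn, h1, one_mul]
        exact one_le_pow₀ hD1
      · rw [hmn, h1]
        calc (1:ℝ) ≤ (2 * π * R * ‖ξ‖) ^ (s - k + 1) := one_le_pow₀ hxi.le
          _ = ‖ξ‖ ^ (s - k + 1) * (2 * π * R) ^ (s - k + 1) := by rw [mul_pow]; ring
          _ ≤ ‖ξ‖ ^ (s - k + 1) * (2 * π * R) ^ (s + 1) :=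
              mul_le_mul_of_nonneg_left (pow_le_pow_right₀ hD1 (by omega)) (by positivity)
    calc ‖𝓕 G ξ‖ ≤ ∫ v, ‖G v‖ := htriv
      _ ≤ (2 * π * R) ^ s * A1 := hIG
      _ ≤ (2 * π * R) ^ s * (M0 * (eLpNorm a q volume).toReal) :=
          mul_le_mul_of_nonneg_left hA1 (by positivity)
      _ ≤ ((2 * π * R) ^ s * (M0 * (eLpNorm a q volume).toReal)) * (mn * (2 * π * R) ^ (s + 1)) := by
          refine le_mul_of_one_le_right ?_ hmn1
          positivity
      _ ≤ 2 * (2 * π * R) ^ (2 * s + 2) * M0 * (eLpNorm a q volume).toReal * mn := by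
          rw [show ((2 * π * R) ^ s * (M0 * (eLpNorm a q volume).toReal)) *
              (mn * (2 * π * R) ^ (s + 1))
            = ((2 * π * R) ^ (s + (s+1)) * M0) * (eLpNorm a q volume).toReal * mn by
              rw [pow_add]; ring]
          refine mul_le_mul_of_nonneg_right ?_ hmn0
          refine mul_le_mul_of_nonneg_right ?_ ENNReal.toReal_nonneg
          rw [show 2 * (2 * π * R) ^ (2 * s + 2) * M0 = (2 * (2 * π * R) ^ (2 * s + 2)) * M0 by
            ring]
          refine mul_le_mul_of_nonneg_right ?_ (by linarith)
          calc (2 * π * R) ^ (s + (s + 1)) ≤ (2 * π * R) ^ (2 * s + 2) :=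
              pow_le_pow_right₀ hD1 (by omega)
            _ ≤ 2 * (2 * π * R) ^ (2 * s + 2) := by linarith [pow_pos hDpos (2 * s + 2)]
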